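/- Let 1<p<∞, p'=p/(p−1), and s,t,q,Q∈ℝ. Suppose that either (s+t≤−1 and Q≤q) or s+t+(Q−q)/p ≤ −1. Then for every measurable function ω:𝔹→(0,∞), at least one of the two integrals ∫_𝔹 ω dμ_{Q+pt} and ∫_𝔹 ω^{−1/(p−1)} dμ_{q+p'(s−q)} is infinite. -/

import Mathlib

open MeasureTheory Complex
open scoped ENNReal NNReal

noncomputable section

/-- `ℂ^N` with the Euclidean norm. -/
abbrev EN (N : ℕ) := EuclideanSpace ℂ (Fin N)

instance (N : ℕ) : MeasurableSpace (EN N) := MeasurableSpace.comap WithLp.ofLp MeasurableSpace.pi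
instance (N : ℕ) : BorelSpace (EN N) := PiLp.borelSpace 2

/-- Lebesgue measure on `ℂ^N`. -/
def volEN (N : ℕ) : Measure (EN N) :=
  Measure.map (WithLp.toLp 2) (Measure.pi fun _ : Fin N => (volume : Measure ℂ))

/-- The Hermitian pairing `⟨z,w⟩ = ∑ z_j conj (w_j)`. -/
def bInner {N : ℕ} (z w : EN N) : ℂ := ∑ j, z j * (starRingEnd ℂ) (w j)

/-- The open unit ball `𝔹` of `ℂ^N`. -/
def ball01 (N : ℕ) : Set (EN N) := Metric.ball 0 1

/-- Lebesgue measure on the unit ball, normalized so that `μ(𝔹) = 1`. -/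
def muB (N : ℕ) : Measure (EN N) :=
  (volEN N (Metric.ball (0 : EN N) 1))⁻¹ • (volEN N).restrict (Metric.ball (0 : EN N) 1)

/-- The weighted measure `dμ_q = (1-|z|²)^q dμ`. -/
def muW (N : ℕ) (q : ℝ) : Measure (EN N) :=
  (muB N).withDensity fun z => ENNReal.ofReal ((1 - ‖z‖ ^ 2) ^ q)

/-- The Bergman–Besov kernel `K_a`. -/
def kernelK (N : ℕ) (a : ℝ) (z w : EN N) : ℂ :=
  if -((N : ℝ) + 1) < a then
    (1 - bInner z w) ^ (-((N : ℂ) + 1 + (a : ℂ)))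
  else
    ∑' k : ℕ, ((Nat.factorial k : ℂ)
        / ((Real.Gamma ((1 - (N : ℝ) - a) + k) / Real.Gamma (1 - (N : ℝ) - a) : ℝ) : ℂ))
      * bInner z w ^ k

/-- The operator `T_{a,b}`. -/
def Tab (N : ℕ) (a b : ℝ) (f : EN N → ℂ) (z : EN N) : ℂ :=
  ∫ w, kernelK N a z w * f w * (((1 - ‖w‖ ^ 2) ^ b : ℝ) : ℂ) ∂(muB N)

/-- The operator `P_{s,t}`. -/
def Pop (N : ℕ) (s t : ℝ) (f : EN N → ℂ) (z : EN N) : ℂ :=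
  (((1 - ‖z‖ ^ 2) ^ t : ℝ) : ℂ) * Tab N (s + t) s f z

/-- The positive operator `S_{a,b}`. -/
def Sop (N : ℕ) (a b : ℝ) (f : EN N → ℂ) (z : EN N) : ℝ≥0∞ :=
  ∫⁻ w, ENNReal.ofReal (‖kernelK N a z w‖ * ‖f w‖ * (1 - ‖w‖ ^ 2) ^ b) ∂(muB N)

/-- Absolute convergence of the integral defining `T_{a,b} f (z)`. -/
def TIntegrable (N : ℕ) (a b : ℝ) (f : EN N → ℂ) (z : EN N) : Prop :=
  Integrable (fun w => kernelK N a z w * f w * (((1 - ‖w‖ ^ 2) ^ b : ℝ) : ℂ)) (muB N)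

/-- `∫_𝔹 |f|^p ω dμ_q`. -/
def wLp (N : ℕ) (p q : ℝ) (ω : EN N → ℝ) (f : EN N → ℂ) : ℝ≥0∞ :=
  ∫⁻ z, ENNReal.ofReal (‖f z‖ ^ p * ω z) ∂(muW N q)

/-- A weight: positive on `𝔹` and locally integrable there. -/
def IsWeight (N : ℕ) (ω : EN N → ℝ) : Prop :=
  Measurable ω ∧ (∀ z ∈ ball01 N, 0 < ω z) ∧ LocallyIntegrableOn ω (ball01 N) (volEN N)

/-- `T_{a,b}` is well defined and continuous from `L^p(ω dμ_q)` to `L^p(ω dμ_Q)`. -/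
def TBounded (N : ℕ) (p a b q Q : ℝ) (ω : EN N → ℝ) : Prop :=
  (∀ f : EN N → ℂ, Measurable f → wLp N p q ω f < ⊤ → ∀ z ∈ ball01 N, TIntegrable N a b f z) ∧
  ∃ C : ℝ, ∀ f : EN N → ℂ, Measurable f → wLp N p q ω f < ⊤ →
    wLp N p Q ω (Tab N a b f) ≤ ENNReal.ofReal C * wLp N p q ω f

/-- `P_{s,t}` is well defined and continuous from `L^p(ω dμ_q)` to `L^p(ω dμ_Q)`. -/
def PBounded (N : ℕ) (p s t q Q : ℝ) (ω : EN N → ℝ) : Prop :=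
  (∀ f : EN N → ℂ, Measurable f → wLp N p q ω f < ⊤ → ∀ z ∈ ball01 N,
      TIntegrable N (s + t) s f z) ∧
  ∃ C : ℝ, ∀ f : EN N → ℂ, Measurable f → wLp N p q ω f < ⊤ →
    wLp N p Q ω (Pop N s t f) ≤ ENNReal.ofReal C * wLp N p q ω f

/-- `S_{a,b}` is well defined and continuous from `L^p(ω dμ_q)` to `L^p(ω dμ_Q)`. -/
def SBounded (N : ℕ) (p a b q Q : ℝ) (ω : EN N → ℝ) : Prop :=
  (∀ f : EN N → ℂ, Measurable f → wLp N p q ω f < ⊤ → ∀ z ∈ ball01 N, Sop N a b f z < ⊤) ∧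
  ∃ C : ℝ, ∀ f : EN N → ℂ, Measurable f → wLp N p q ω f < ⊤ →
    ∫⁻ z, Sop N a b f z ^ p * ENNReal.ofReal (ω z) ∂(muW N Q) ≤
      ENNReal.ofReal C * wLp N p q ω f

/-- The pseudo-distance `d(z,w) = ||z|-|w|| + |1 - ⟨z,w⟩/(|z||w|)|`. -/
def pd {N : ℕ} (z w : EN N) : ℝ :=
  |‖z‖ - ‖w‖| + ‖1 - bInner z w / ((‖z‖ : ℂ) * (‖w‖ : ℂ))‖

/-- The pseudoball `B(ζ,R)`. -/
def pball (N : ℕ) (ζ : EN N) (R : ℝ) : Set (EN N) := {z ∈ ball01 N | pd z ζ < R}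

/-- The maximal function `m'_{a,b}`. -/
def mMax' (N : ℕ) (a b : ℝ) (f : EN N → ℂ) (z : EN N) : ℝ≥0∞ :=
  ⨆ (ζ : EN N) (_ : ‖ζ‖ < 1) (R : ℝ) (_ : 1 - ‖ζ‖ < R) (_ : z ∈ pball N ζ R),
    ENNReal.ofReal (R ^ (-((N : ℝ) + 1 + a))) *
      ∫⁻ w in pball N ζ R, ENNReal.ofReal (‖f w‖ * (1 - ‖w‖ ^ 2) ^ b) ∂(muB N)

/-- The maximal function `m_{a,b}`. -/
def mMax (N : ℕ) (a b : ℝ) (f : EN N → ℂ) (z : EN N) : ℝ≥0∞ :=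
  ⨆ (ζ : EN N) (_ : ‖ζ‖ < 1) (R : ℝ) (_ : 1 - ‖ζ‖ < R) (_ : z ∈ pball N ζ R),
    (muW N a (pball N ζ R))⁻¹ *
      ∫⁻ w in pball N ζ R, ENNReal.ofReal (‖f w‖ * (1 - ‖w‖ ^ 2) ^ b) ∂(muB N)

/-- Normalizing factor in the Békollé–Bonami type class `D_p^{s,t,q,Q}`. -/
def Dnorm (N : ℕ) (p s t q Q : ℝ) (ζ : EN N) (R : ℝ) : ℝ≥0∞ :=
  if -1 < s + t then (muW N (s + t + (Q - q) / p) (pball N ζ R))⁻¹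
  else ENNReal.ofReal (R ^ (-((N : ℝ) + 1 + s + t + (Q - q) / p)))

/-- The `D_p^{s,t,q,Q}` characteristic of the weight `ω`. -/
def Dconst (N : ℕ) (p s t q Q : ℝ) (ω : EN N → ℝ) : ℝ≥0∞ :=
  ⨆ (ζ : EN N) (_ : ‖ζ‖ < 1) (R : ℝ) (_ : 1 - ‖ζ‖ < R),
    (Dnorm N p s t q Q ζ R *
        ∫⁻ z in pball N ζ R, ENNReal.ofReal (ω z) ∂(muW N (Q + p * t))) *
    (Dnorm N p s t q Q ζ R *
        ∫⁻ z in pball N ζ R, ENNReal.ofReal (ω z ^ (-(1 / (p - 1))))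
          ∂(muW N (q + (p / (p - 1)) * (s - q)))) ^ (p - 1)

-- auxiliary lemmas
lemma aux_pow_sub (d : ℕ) (hd : 1 ≤ d) {a b : ℝ} (hb : 0 ≤ b) (hab : b ≤ a) :
    (a - b) * b ^ (d - 1) ≤ a ^ d - b ^ d := by
  have ha : 0 ≤ a := hb.trans hab
  rw [← geom_sum₂_mul a b d]
  have h0 : b ^ (d - 1) ≤ ∑ i ∈ Finset.range d, a ^ i * b ^ (d - 1 - i) := by
    have := Finset.single_le_sum (f := fun i => a ^ i * b ^ (d - 1 - i))
      (fun i _ => mul_nonneg (pow_nonneg ha i) (pow_nonneg hb _))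
      (Finset.mem_range.mpr hd)
    simpa using this
  calc (a - b) * b ^ (d - 1) = b ^ (d-1) * (a - b) := by ring
    _ ≤ (∑ i ∈ Finset.range d, a ^ i * b ^ (d - 1 - i)) * (a - b) :=
        mul_le_mul_of_nonneg_right h0 (by linarith)

lemma div_lemma (N : ℕ) (hN : 1 ≤ N) {α : ℝ} (hα : α ≤ -1) :
    ∫⁻ z in Metric.ball (0 : EN N) 1, ENNReal.ofReal ((1 - ‖z‖ ^ 2) ^ α) ∂(volEN N) = ⊤ := by
  haveI : Nonempty (Fin N) := ⟨⟨0, hN⟩⟩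
  haveI : (volEN N).IsAddHaarMeasure :=
    (PiLp.continuousLinearEquiv 2 ℂ (fun _ : Fin N => ℂ)).symm.isAddHaarMeasure_map _
  set V : ℝ≥0∞ := volEN N (Metric.ball (0 : EN N) 1) with hV
  have hV0 : V ≠ 0 := (Metric.isOpen_ball.measure_pos _ ⟨0, Metric.mem_ball_self one_pos⟩).ne'
  have hVtop : V ≠ ⊤ := (measure_ball_lt_top).ne
  set d : ℕ := Module.finrank ℝ (EN N) with hdd
  have hd : 1 ≤ d := Module.finrank_pos
  set r : ℕ → ℝ := fun k => 1 - (1/2 : ℝ) ^ k with hr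
  have hr0 : ∀ k, 0 ≤ r k := by
    intro k
    have : (1/2 : ℝ) ^ k ≤ 1 := pow_le_one₀ (by norm_num) (by norm_num)
    show 0 ≤ 1 - (1/2:ℝ)^k
    linarith
  have hr1 : ∀ k, r k < 1 := by
    intro k
    show (1:ℝ) - (1/2)^k < 1
    have : (0:ℝ) < (1/2)^k := by positivity
    linarith
  have hrmono : ∀ {i j : ℕ}, i ≤ j → r i ≤ r j := by
    intro i j hij
    have := pow_le_pow_of_le_one (by norm_num : (0:ℝ) ≤ 1/2) (by norm_num) hij
    show (1:ℝ) - (1/2)^i ≤ 1 - (1/2)^j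
    linarith
  have hrhalf : ∀ k, 1 ≤ k → (1/2 : ℝ) ≤ r k := by
    intro k hk
    have := pow_le_pow_of_le_one (by norm_num : (0:ℝ) ≤ 1/2) (by norm_num) hk
    show (1/2:ℝ) ≤ 1 - (1/2)^k
    have h1 : (1/2:ℝ)^k ≤ (1/2)^1 := this
    norm_num at h1; linarith
  set A : ℕ → Set (EN N) := fun j =>
    Metric.ball (0 : EN N) (r (j+2)) \ Metric.ball 0 (r (j+1)) with hA
  have hAmeas : ∀ j, MeasurableSet (A j) :=
    fun j => measurableSet_ball.diff measurableSet_ball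
  have hAdisj : Pairwise (Function.onFun Disjoint A) := by
    intro i j hij
    wlog hlt : i < j generalizing i j
    · exact (this hij.symm (by omega)).symm
    refine Set.disjoint_left.mpr ?_
    rintro z ⟨hz1, -⟩ ⟨-, hz2⟩
    apply hz2
    exact Metric.ball_subset_ball (hrmono (by omega)) hz1
  have hAsub : (⋃ j, A j) ⊆ Metric.ball (0 : EN N) 1 := by
    refine Set.iUnion_subset fun j => ?_
    exact (Set.diff_subset).trans (Metric.ball_subset_ball (hr1 _).le)
  have key : ∀ j : ℕ, ENNReal.ofReal ((1/2 : ℝ) ^ (d + 1)) * V ≤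
      ∫⁻ z in A j, ENNReal.ofReal ((1 - ‖z‖ ^ 2) ^ α) ∂(volEN N) := by
    intro j
    -- pointwise lower bound on A j
    have hpt : ∀ z ∈ A j, ENNReal.ofReal ((2:ℝ) ^ j) ≤ ENNReal.ofReal ((1 - ‖z‖ ^ 2) ^ α) := by
      intro z hz
      obtain ⟨hz1, hz2⟩ := hz
      rw [Metric.mem_ball, dist_zero_right] at hz1
      rw [Metric.mem_ball, dist_zero_right, not_lt] at hz2
      have hzlt : ‖z‖ < 1 := hz1.trans_le (hr1 _).le
      have hz0 : 0 ≤ ‖z‖ := norm_nonneg z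
      have hu0 : 0 < 1 - ‖z‖ ^ 2 := by nlinarith
      have hub : 1 - ‖z‖ ^ 2 ≤ (1/2 : ℝ) ^ j := by
        have h1 : 1 - ‖z‖ ≤ (1/2:ℝ) ^ (j+1) := by
          have := hz2; simp only [hr] at this ⊢; linarith
        nlinarith [pow_nonneg (by norm_num : (0:ℝ) ≤ 1/2) (j+1), pow_succ (1/2:ℝ) j]
      have hbase : (0:ℝ) < (1/2:ℝ) ^ j := by positivity
      have h2 : ((1/2:ℝ) ^ j) ^ α ≤ (1 - ‖z‖ ^ 2) ^ α :=
        Real.rpow_le_rpow_of_nonpos hu0 hub (by linarith)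
      have h3 : ((1/2:ℝ) ^ j) ^ (-1 : ℝ) ≤ ((1/2:ℝ) ^ j) ^ α :=
        Real.rpow_le_rpow_of_exponent_ge hbase (pow_le_one₀ (by norm_num) (by norm_num)) hα
      have h4 : ((1/2:ℝ) ^ j) ^ (-1 : ℝ) = (2:ℝ) ^ j := by
        rw [Real.rpow_neg_one]
        rw [← inv_pow]; norm_num
      exact ENNReal.ofReal_le_ofReal (by rw [← h4]; exact h3.trans h2)
    have hAvol : ENNReal.ofReal ((1/2:ℝ) ^ (j+2) * (1/2:ℝ) ^ (d-1)) * V ≤ volEN N (A j) := by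
      have hsub : Metric.ball (0 : EN N) (r (j+1)) ⊆ Metric.ball 0 (r (j+2)) :=
        Metric.ball_subset_ball (hrmono (by omega))
      have hfin : volEN N (Metric.ball (0 : EN N) (r (j+1))) ≠ ⊤ := measure_ball_lt_top.ne
      rw [hA]
      rw [measure_diff hsub measurableSet_ball.nullMeasurableSet hfin]
      rw [Measure.addHaar_ball _ _ (hr0 _), Measure.addHaar_ball _ _ (hr0 _)]
      rw [← ENNReal.sub_mul (fun _ _ => hVtop)]
      refine mul_le_mul_left ?_ V
      rw [← ENNReal.ofReal_sub _ (pow_nonneg (hr0 _) _)]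
      refine ENNReal.ofReal_le_ofReal ?_
      have := aux_pow_sub d hd (hr0 (j+1)) (hrmono (by omega : j+1 ≤ j+2))
      have hdiff : r (j+2) - r (j+1) = (1/2:ℝ) ^ (j+2) := by
        show (1 - (1/2:ℝ)^(j+2)) - (1 - (1/2:ℝ)^(j+1)) = (1/2:ℝ)^(j+2)
        have : (1/2:ℝ)^(j+1) = 2 * (1/2:ℝ)^(j+2) := by rw [pow_succ]; ring
        linarith
      have hbpow : (1/2:ℝ) ^ (d-1) ≤ r (j+1) ^ (d-1) :=
        pow_le_pow_left₀ (by norm_num) (hrhalf _ (by omega)) _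
      calc (1/2:ℝ) ^ (j+2) * (1/2:ℝ) ^ (d-1)
          ≤ (r (j+2) - r (j+1)) * r (j+1) ^ (d-1) := by
            rw [hdiff]; exact mul_le_mul_of_nonneg_left hbpow (by positivity)
        _ ≤ r (j+2) ^ d - r (j+1) ^ d := this
    calc ENNReal.ofReal ((1/2 : ℝ) ^ (d + 1)) * V
        ≤ ENNReal.ofReal ((2:ℝ)^j) * (ENNReal.ofReal ((1/2:ℝ) ^ (j+2) * (1/2:ℝ) ^ (d-1)) * V) := by
          rw [← mul_assoc, ← ENNReal.ofReal_mul (by positivity)]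
          refine mul_le_mul_left (ENNReal.ofReal_le_ofReal (le_of_eq ?_)) V
          have h2j : (2:ℝ)^j * (1/2:ℝ)^j = 1 := by
            rw [← mul_pow]; norm_num
          have hsplit : (1/2:ℝ) ^ (j+2) = (1/2:ℝ)^j * (1/2:ℝ)^2 := by rw [← pow_add]
          have hd1 : (1/2:ℝ)^(d+1) = (1/2:ℝ)^(d-1) * (1/2:ℝ)^2 := by
            rw [← pow_add]; congr 1; omega
          rw [hsplit, hd1]
          linear_combination (-(1/4:ℝ) * (1/2:ℝ)^(d-1)) * h2j
      _ ≤ ENNReal.ofReal ((2:ℝ)^j) * volEN N (A j) := mul_le_mul_right hAvol _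
      _ ≤ ∫⁻ z in A j, ENNReal.ofReal ((1 - ‖z‖ ^ 2) ^ α) ∂(volEN N) := by
          rw [← setLIntegral_const (A j) (ENNReal.ofReal ((2:ℝ)^j))]
          exact setLIntegral_mono_ae (by fun_prop) (Filter.Eventually.of_forall hpt)
  have hsum : (∑' j : ℕ, ∫⁻ z in A j, ENNReal.ofReal ((1 - ‖z‖ ^ 2) ^ α) ∂(volEN N)) = ⊤ := by
    rw [eq_top_iff]
    calc (⊤ : ℝ≥0∞) = ∑' _ : ℕ, ENNReal.ofReal ((1/2 : ℝ) ^ (d + 1)) * V :=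
          (ENNReal.tsum_const_eq_top_of_ne_zero
            (mul_ne_zero (ENNReal.ofReal_pos.mpr (by positivity)).ne' hV0)).symm
      _ ≤ _ := ENNReal.tsum_le_tsum key
  rw [eq_top_iff, ← hsum, ← lintegral_iUnion hAmeas hAdisj]
  exact lintegral_mono_set hAsub


lemma div_lemma_muB (N : ℕ) (hN : 1 ≤ N) {α : ℝ} (hα : α ≤ -1) :
    ∫⁻ z, ENNReal.ofReal ((1 - ‖z‖ ^ 2) ^ α) ∂(muB N) = ⊤ := by
  haveI : Nonempty (Fin N) := ⟨⟨0, hN⟩⟩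
  haveI : (volEN N).IsAddHaarMeasure :=
    (PiLp.continuousLinearEquiv 2 ℂ (fun _ : Fin N => ℂ)).symm.isAddHaarMeasure_map _
  have hVtop : volEN N (Metric.ball (0 : EN N) 1) ≠ ⊤ := measure_ball_lt_top.ne
  rw [muB, lintegral_smul_measure, div_lemma N hN hα, smul_eq_mul, ENNReal.mul_top]
  simpa using hVtop


/-- If (`s+t ≤ -1` and `Q ≤ q`) or `s+t+(Q-q)/p ≤ -1`, then for every
measurable `ω : 𝔹 → (0,∞)`, at least one of `∫ ω dμ_{Q+pt}` and
`∫ ω^{-1/(p-1)} dμ_{q+p'(s-q)}` is infinite. -/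
theorem stmt14 (N : ℕ) (hN : 1 ≤ N) (p p' s t q Q : ℝ)
    (hp : 1 < p) (hp' : p' = p / (p - 1))
    (hcase : (s + t ≤ -1 ∧ Q ≤ q) ∨ s + t + (Q - q) / p ≤ -1)
    (ω : EN N → ℝ) (hmeas : Measurable ω) (hpos : ∀ z ∈ ball01 N, 0 < ω z) :
    (∫⁻ z, ENNReal.ofReal (ω z) ∂(muW N (Q + p * t))) = ⊤ ∨
    (∫⁻ z, ENNReal.ofReal (ω z ^ (-(1 / (p - 1)))) ∂(muW N (q + p' * (s - q)))) = ⊤ := by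
  by_contra hcon
  push_neg at hcon
  obtain ⟨h1, h2⟩ := hcon
  have hp0 : (0:ℝ) < p := lt_trans one_pos hp
  have hp1 : p - 1 ≠ 0 := ne_of_gt (by linarith)
  have hpq : p.HolderConjugate p' := by
    rw [hp']; exact Real.HolderConjugate.conjExponent hp
  have hp'0 : (0:ℝ) < p' := hpq.symm.pos
  set A : ℝ := Q + p * t with hAdef
  set B : ℝ := q + p' * (s - q) with hBdef
  set α : ℝ := s + t + (Q - q) / p with hαdef
  have hα : α ≤ -1 := by
    rcases hcase with ⟨h3, h4⟩ | h3
    · have : (Q - q) / p ≤ 0 := div_nonpos_of_nonpos_of_nonneg (by linarith) hp0.le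
      rw [hαdef]; linarith
    · exact h3
  have hAB : A / p + B / p' = α := by
    rw [hAdef, hBdef, hαdef, hp']
    field_simp
    ring
  set F : EN N → ℝ≥0∞ := fun z =>
    ENNReal.ofReal (ω z ^ (1/p) * (1 - ‖z‖ ^ 2) ^ (A/p)) with hFdef
  set G : EN N → ℝ≥0∞ := fun z =>
    ENNReal.ofReal (ω z ^ (-(1/p)) * (1 - ‖z‖ ^ 2) ^ (B/p')) with hGdef
  have hnm : Measurable fun z : EN N => 1 - ‖z‖ ^ 2 :=
    (measurable_const.sub ((measurable_norm).pow_const 2))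
  have hrw : ∀ c : ℝ, Measurable fun z : EN N => ω z ^ c := fun c => by fun_prop
  have hrw2 : ∀ c : ℝ, Measurable fun z : EN N => (1 - ‖z‖ ^ 2) ^ c := fun c => by fun_prop
  have hF : Measurable F := (((hrw _).mul (hrw2 _))).ennreal_ofReal
  have hG : Measurable G := (((hrw _).mul (hrw2 _))).ennreal_ofReal
  have haeball : ∀ᵐ z ∂(muB N), z ∈ Metric.ball (0 : EN N) 1 := by
    rw [muB]
    exact Measure.ae_smul_measure (ae_restrict_mem measurableSet_ball) _
  have hball : ∀ z ∈ Metric.ball (0 : EN N) 1, 0 < ω z ∧ 0 < 1 - ‖z‖ ^ 2 := by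
    intro z hz
    refine ⟨hpos z hz, ?_⟩
    rw [Metric.mem_ball, dist_zero_right] at hz
    nlinarith [norm_nonneg z]
  -- identify ∫ F^p with the first integral
  have eq1 : ∫⁻ z, F z ^ p ∂(muB N) = ∫⁻ z, ENNReal.ofReal (ω z) ∂(muW N A) := by
    rw [muW, lintegral_withDensity_eq_lintegral_mul _ ((hrw2 _)).ennreal_ofReal
      hmeas.ennreal_ofReal]
    refine lintegral_congr_ae (haeball.mono fun z hz => ?_)
    obtain ⟨hx, hu⟩ := hball z hz
    simp only [hFdef, Pi.mul_apply]
    rw [ENNReal.ofReal_rpow_of_nonneg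
      (mul_nonneg (Real.rpow_nonneg hx.le _) (Real.rpow_nonneg hu.le _)) hp0.le]
    rw [Real.mul_rpow (Real.rpow_nonneg hx.le _) (Real.rpow_nonneg hu.le _)]
    rw [← Real.rpow_mul hx.le, ← Real.rpow_mul hu.le]
    rw [one_div, inv_mul_cancel₀ hp0.ne', div_mul_cancel₀ _ hp0.ne', Real.rpow_one]
    rw [← ENNReal.ofReal_mul (Real.rpow_nonneg hu.le _)]
    rw [mul_comm]
  have eq2 : ∫⁻ z, G z ^ p' ∂(muB N) =
      ∫⁻ z, ENNReal.ofReal (ω z ^ (-(1 / (p - 1)))) ∂(muW N B) := by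
    rw [muW, lintegral_withDensity_eq_lintegral_mul _ ((hrw2 _)).ennreal_ofReal
      ((hrw _)).ennreal_ofReal]
    refine lintegral_congr_ae (haeball.mono fun z hz => ?_)
    obtain ⟨hx, hu⟩ := hball z hz
    simp only [hGdef, Pi.mul_apply]
    rw [ENNReal.ofReal_rpow_of_nonneg
      (mul_nonneg (Real.rpow_nonneg hx.le _) (Real.rpow_nonneg hu.le _)) hp'0.le]
    rw [Real.mul_rpow (Real.rpow_nonneg hx.le _) (Real.rpow_nonneg hu.le _)]
    rw [← Real.rpow_mul hx.le, ← Real.rpow_mul hu.le]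
    have hexp : -(1/p) * p' = -(1/(p-1)) := by rw [hp']; field_simp
    rw [hexp, div_mul_cancel₀ _ hp'0.ne']
    rw [← ENNReal.ofReal_mul (Real.rpow_nonneg hu.le _)]
    rw [mul_comm]
  have eqFG : ∫⁻ z, F z * G z ∂(muB N) =
      ∫⁻ z, ENNReal.ofReal ((1 - ‖z‖ ^ 2) ^ α) ∂(muB N) := by
    refine lintegral_congr_ae (haeball.mono fun z hz => ?_)
    obtain ⟨hx, hu⟩ := hball z hz
    simp only [hFdef, hGdef]
    rw [← ENNReal.ofReal_mul (mul_nonneg (Real.rpow_nonneg hx.le _) (Real.rpow_nonneg hu.le _))]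
    congr 1
    rw [show ω z ^ (1/p) * (1 - ‖z‖ ^ 2) ^ (A/p) * (ω z ^ (-(1/p)) * (1 - ‖z‖ ^ 2) ^ (B/p'))
        = (ω z ^ (1/p) * ω z ^ (-(1/p))) * ((1 - ‖z‖ ^ 2) ^ (A/p) * (1 - ‖z‖ ^ 2) ^ (B/p'))
      by ring]
    rw [← Real.rpow_add hx, ← Real.rpow_add hu, hAB]
    simp
  have hHolder := ENNReal.lintegral_mul_le_Lp_mul_Lq (muB N) hpq hF.aemeasurable hG.aemeasurable
  simp only [Pi.mul_apply] at hHolder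
  rw [eqFG, eq1, eq2] at hHolder
  rw [div_lemma_muB N hN hα] at hHolder
  have hlt : (∫⁻ z, ENNReal.ofReal (ω z) ∂(muW N A)) ^ (1/p) *
      (∫⁻ z, ENNReal.ofReal (ω z ^ (-(1 / (p - 1)))) ∂(muW N B)) ^ (1/p') < ⊤ :=
    ENNReal.mul_lt_top
      (ENNReal.rpow_lt_top_of_nonneg (by positivity) h1)
      (ENNReal.rpow_lt_top_of_nonneg (by positivity) h2)
  exact absurd (lt_of_le_of_lt hHolder hlt) (by simp)
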